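/- Let X be a real random variable with E[X] = u and Var(X) = σ² < ∞, let α > 0 satisfy α²σ² < 1, and let φ satisfy the Catoni bounds. If u_α is any real number such that E[φ(α(X - u_α))] = 0, then |u_α - u| ≤ ασ²/√(1 - α²σ²). -/

import Mathlib

open MeasureTheory ProbabilityTheory

set_option maxHeartbeats 1000000 in
theorem catoni_bias_bound
    {Ω : Type*} [MeasurableSpace Ω] (μ : Measure Ω) [IsProbabilityMeasure μ]
    (X : Ω → ℝ) (u σ α uα : ℝ)
    (hX2 : MemLp X 2 μ)
    (hmean : ∫ ω, X ω ∂μ = u)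
    (hvar : variance X μ = σ^2)
    (hσ : 0 < σ) (hα : 0 < α) (hασ : α^2 * σ^2 < 1)
    (φ : ℝ → ℝ) (hcont : Continuous φ) (hmono : Monotone φ)
    (hφ : ∀ t : ℝ, -Real.log (1 - t + t^2/2) ≤ φ t ∧ φ t ≤ Real.log (1 + t + t^2/2))
    (hroot : ∫ ω, φ (α * (X ω - uα)) ∂μ = 0) :
    |uα - u| ≤ α * σ^2 / Real.sqrt (1 - α^2 * σ^2) := by
  -- pointwise bounds for φ
  have hφub : ∀ t : ℝ, φ t ≤ t + t^2/2 := by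
    intro t
    have hpos : (0:ℝ) < 1 + t + t^2/2 := by nlinarith [sq_nonneg (t+1)]
    have := Real.log_le_sub_one_of_pos hpos
    have h2 := (hφ t).2
    linarith
  have hφlb : ∀ t : ℝ, t - t^2/2 ≤ φ t := by
    intro t
    have hpos : (0:ℝ) < 1 - t + t^2/2 := by nlinarith [sq_nonneg (t-1)]
    have := Real.log_le_sub_one_of_pos hpos
    have h1 := (hφ t).1
    linarith
  -- basic integrability
  have hXi : Integrable X μ := hX2.integrable (by norm_num)
  have hXsq : ∀ x : ℝ, Integrable (fun ω => (X ω - x)^2) μ := fun x =>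
    (hX2.sub (memLp_const x)).integrable_sq
  have hXx : ∀ x : ℝ, Integrable (fun ω => X ω - x) μ := fun x => hXi.sub (integrable_const x)
  -- second moment
  have hX2sq : Integrable (fun ω => X ω ^ 2) μ := hX2.integrable_sq
  have hm2' : ∫ ω, X ω ^ 2 ∂μ = σ^2 + u^2 := by
    have := variance_eq_sub hX2
    simp only [Pi.pow_apply] at this
    rw [hvar, hmean] at this
    linarith
  have hm2 : ∀ x : ℝ, ∫ ω, (X ω - x)^2 ∂μ = σ^2 + (u - x)^2 := by
    intro x
    have hI1 : Integrable (fun ω => X ω ^ 2 - 2*x * X ω) μ := by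
      exact hX2sq.sub (hXi.const_mul (2*x))
    have heq : ∀ ω, (X ω - x)^2 = (X ω ^ 2 - 2*x * X ω) + x^2 := fun ω => by ring
    simp_rw [heq]
    rw [integral_add hI1 (integrable_const _),
      integral_sub hX2sq (hXi.const_mul (2*x)), integral_const_mul, hmean, hm2',
      integral_const]
    simp [measure_univ]
    ring
  -- integrability of the composed functions
  have hint : ∀ x : ℝ, Integrable (fun ω => φ (α * (X ω - x))) μ := by
    intro x
    have hmeas : AEStronglyMeasurable (fun ω => φ (α * (X ω - x))) μ :=
      hcont.comp_aestronglyMeasurable ((hX2.1.sub aestronglyMeasurable_const).const_mul α)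
    have hg : Integrable (fun ω => |α * (X ω - x)| + (α^2/2) * (X ω - x)^2) μ := by
      exact ((hXx x).const_mul α).abs.add ((hXsq x).const_mul (α^2/2))
    refine hg.mono' hmeas (ae_of_all _ fun ω => ?_)
    set t := α * (X ω - x) with ht
    have h1 := hφub t
    have h2 := hφlb t
    have hts : (α^2/2) * (X ω - x)^2 = t^2/2 := by rw [ht]; ring
    rw [Real.norm_eq_abs, hts, abs_le]
    constructor
    · nlinarith [neg_abs_le t]
    · nlinarith [le_abs_self t]
  -- the quadratic integrands
  have hqint : ∀ x : ℝ, Integrable (fun ω => α * (X ω - x) + (α^2/2) * (X ω - x)^2) μ := by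
    intro x
    exact ((hXx x).const_mul α).add ((hXsq x).const_mul (α^2/2))
  have hqint' : ∀ x : ℝ, Integrable (fun ω => α * (X ω - x) - (α^2/2) * (X ω - x)^2) μ := by
    intro x
    exact ((hXx x).const_mul α).sub ((hXsq x).const_mul (α^2/2))
  have hxmval : ∀ x : ℝ, ∫ ω, α * (X ω - x) ∂μ = α * (u - x) := by
    intro x
    rw [integral_const_mul, integral_sub hXi (integrable_const x), hmean, integral_const]
    simp [measure_univ]
  have hsqval : ∀ x : ℝ, ∫ ω, (α^2/2) * (X ω - x)^2 ∂μ = (α^2/2) * (σ^2 + (u - x)^2) := by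
    intro x
    rw [integral_const_mul, hm2 x]
  have hqval : ∀ x : ℝ, ∫ ω, (α * (X ω - x) + (α^2/2) * (X ω - x)^2) ∂μ
      = α * (u - x) + (α^2/2) * (σ^2 + (u - x)^2) := by
    intro x
    rw [integral_add (by exact (hXx x).const_mul α) (by exact (hXsq x).const_mul (α^2/2)),
      hxmval x, hsqval x]
  have hqval' : ∀ x : ℝ, ∫ ω, (α * (X ω - x) - (α^2/2) * (X ω - x)^2) ∂μ
      = α * (u - x) - (α^2/2) * (σ^2 + (u - x)^2) := by
    intro x
    rw [integral_sub (by exact (hXx x).const_mul α) (by exact (hXsq x).const_mul (α^2/2)),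
      hxmval x, hsqval x]
  -- upper and lower bounds on the expectation of φ
  have hup : ∀ x : ℝ, ∫ ω, φ (α * (X ω - x)) ∂μ
      ≤ α * (u - x) + (α^2/2) * (σ^2 + (u - x)^2) := by
    intro x
    rw [← hqval x]
    refine integral_mono (hint x) (hqint x) fun ω => ?_
    have := hφub (α * (X ω - x))
    nlinarith [this]
  have hlo : ∀ x : ℝ, α * (u - x) - (α^2/2) * (σ^2 + (u - x)^2)
      ≤ ∫ ω, φ (α * (X ω - x)) ∂μ := by
    intro x
    rw [← hqval' x]
    refine integral_mono (hqint' x) (hint x) fun ω => ?_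
    have := hφlb (α * (X ω - x))
    nlinarith [this]
  -- monotonicity of the expectation in x
  have hmono' : ∀ x : ℝ, x ≤ uα → 0 ≤ ∫ ω, φ (α * (X ω - x)) ∂μ := by
    intro x hx
    rw [← hroot]
    refine integral_mono (hint uα) (hint x) fun ω => ?_
    exact hmono (by nlinarith)
  have hmono'' : ∀ x : ℝ, uα ≤ x → ∫ ω, φ (α * (X ω - x)) ∂μ ≤ 0 := by
    intro x hx
    rw [← hroot]
    refine integral_mono (hint x) (hint uα) fun ω => ?_
    exact hmono (by nlinarith)
  -- arithmetic setup
  set s := Real.sqrt (1 - α^2 * σ^2) with hsdef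
  have hs2 : s^2 = 1 - α^2 * σ^2 := Real.sq_sqrt (by linarith)
  have hspos : 0 < s := Real.sqrt_pos.2 (by linarith)
  have hsle : s ≤ 1 := by nlinarith
  -- the key claim: |uα - u| ≤ (1 - s)/α
  have hkey1 : uα - u ≤ (1 - s)/α := by
    by_contra hcon
    push_neg at hcon
    set d := min (uα - u) (1/α) with hd
    have hd1 : (1 - s)/α < d := by
      apply lt_min hcon
      rw [div_lt_div_iff₀ hα hα, one_mul]
      nlinarith
    have hd2 : d ≤ 1/α := min_le_right _ _
    have hd3 : u + d ≤ uα := by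
      have := min_le_left (uα - u) (1/α)
      simp only [hd]
      linarith
    have h0 : 0 ≤ ∫ ω, φ (α * (X ω - (u + d))) ∂μ := hmono' _ hd3
    have hub := hup (u + d)
    have hneg : α * (u - (u + d)) + (α^2/2) * (σ^2 + (u - (u + d))^2) < 0 := by
      have hαd : 1 - s < α * d := by
        rw [div_lt_iff₀ hα] at hd1; linarith [mul_comm d α]
      have hαd2 : α * d ≤ 1 := by
        have := (le_div_iff₀ hα).mp hd2
        nlinarith
      have h1 : (1 - α * d)^2 < s^2 := by nlinarith
      rw [hs2] at h1
      have heq : u - (u + d) = -d := by ring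
      rw [heq]
      nlinarith
    linarith
  have hkey2 : u - uα ≤ (1 - s)/α := by
    by_contra hcon
    push_neg at hcon
    set d := min (u - uα) (1/α) with hd
    have hd1 : (1 - s)/α < d := by
      apply lt_min hcon
      rw [div_lt_div_iff₀ hα hα, one_mul]
      nlinarith
    have hd2 : d ≤ 1/α := min_le_right _ _
    have hd3 : uα ≤ u - d := by
      have := min_le_left (u - uα) (1/α)
      simp only [hd]
      linarith
    have h0 : ∫ ω, φ (α * (X ω - (u - d))) ∂μ ≤ 0 := hmono'' _ hd3
    have hlb := hlo (u - d)
    have hposd : 0 < α * (u - (u - d)) - (α^2/2) * (σ^2 + (u - (u - d))^2) := by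
      have hαd : 1 - s < α * d := by
        rw [div_lt_iff₀ hα] at hd1; linarith [mul_comm d α]
      have hαd2 : α * d ≤ 1 := by
        have := (le_div_iff₀ hα).mp hd2
        nlinarith
      have h1 : (1 - α * d)^2 < s^2 := by nlinarith
      rw [hs2] at h1
      have heq : u - (u - d) = d := by ring
      rw [heq]
      nlinarith
    linarith
  -- conclude
  have hfin : (1 - s)/α ≤ α * σ^2 / s := by
    rw [div_le_div_iff₀ hα hspos]
    nlinarith
  rw [abs_sub_le_iff]
  constructor <;> linarith
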